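/- Let ε > 1/4 be a real number and let G be a (2+ε)-tough non-Hamiltonian graph on n ≥ 3 vertices possessing a Hamiltonian path from x to y, where x and y are non-adjacent vertices with d(x) + d(y) = n − 2. Let D = N(x) ∩ N(y) and let S be the set of vertices adjacent to neither x nor y. Then |S| = |D| and |D| ≥ 2. -/

import Mathlib

open SimpleGraph

/-- A graph `G` is `t`-tough if for every set `S` of vertices such that `G - S` is
disconnected, `t * c(G - S) ≤ |S|`, where `c` counts connected components. -/
def Tough {V : Type*} [Fintype V] (t : ℝ) (G : SimpleGraph V) : Prop :=
  ∀ S : Finset V, ¬ (G.induce ((↑S : Set V)ᶜ)).Connected →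
    t * (Nat.card (G.induce ((↑S : Set V)ᶜ)).ConnectedComponent) ≤ S.card

namespace Stmt14Aux

set_option linter.unusedSectionVars false

variable {V : Type*} [DecidableEq V] {G : SimpleGraph V}

/-- Build a walk from a chain of adjacent vertices. -/
def mkWalk (G : SimpleGraph V) : (a : V) → (l : List V) → (b : V) →
    List.Chain G.Adj a (l ++ [b]) → G.Walk a b
  | _, [], _, h => Walk.cons (List.chain_cons.mp h).1 Walk.nil
  | _, c :: l, _, h => Walk.cons (List.chain_cons.mp h).1 (mkWalk G c l _ (List.chain_cons.mp h).2)

lemma support_mkWalk : ∀ (a : V) (l : List V) (b : V) (h : List.Chain G.Adj a (l ++ [b])),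
    (mkWalk G a l b h).support = a :: (l ++ [b])
  | _, [], _, _ => rfl
  | a, c :: l, b, h => by
      simp only [mkWalk, Walk.support_cons]
      exact congrArg _ (support_mkWalk c l b _)

lemma edges_mkWalk : ∀ (a : V) (l : List V) (b : V) (h : List.Chain G.Adj a (l ++ [b])),
    (mkWalk G a l b h).edges = List.zipWith (fun u w => s(u, w)) (a :: l) (l ++ [b])
  | _, [], _, _ => rfl
  | a, c :: l, b, h => by
      simp only [mkWalk, Walk.edges_cons]
      exact congrArg _ (edges_mkWalk c l b _)

lemma isHamiltonian_of_cycle_list [Fintype V] (c : V) (l : List V)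
    (hchain : List.Chain G.Adj c (l ++ [c]))
    (hnodup : (c :: l).Nodup) (hcov : ∀ u, u ∈ c :: l) (hlen : 2 ≤ l.length) :
    G.IsHamiltonian := by
  obtain ⟨c₁, l', rfl⟩ : ∃ c₁ l', l = c₁ :: l' := by
    cases l with
    | nil => simp at hlen
    | cons a t => exact ⟨a, t, rfl⟩
  rw [List.cons_append] at hchain; replace hchain := List.chain_cons.mp hchain
  obtain ⟨hadj1, hchain⟩ := hchain
  set q : G.Walk c₁ c := mkWalk G c₁ l' c hchain with hq
  have hqsup : q.support = c₁ :: (l' ++ [c]) := support_mkWalk c₁ l' c hchain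
  have hnd : (c₁ :: (l' ++ [c])).Nodup := by
    have : (c₁ :: (l' ++ [c])).Perm (c :: c₁ :: l') := by
      refine (List.Perm.cons c₁ (List.perm_append_singleton c l')).trans ?_
      exact List.Perm.swap c c₁ l'
    exact this.nodup_iff.mpr hnodup
  have hqpath : q.IsPath := by
    rw [Walk.isPath_def, hqsup]; exact hnd
  have hcmem : c ∉ c₁ :: l' := (List.nodup_cons.mp hnodup).1
  have hqe : s(c, c₁) ∉ q.edges := by
    rw [edges_mkWalk c₁ l' c hchain]
    intro hmem
    rw [List.mem_iff_getElem] at hmem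
    obtain ⟨i, hilen, hEq⟩ := hmem
    have hlz : i < l'.length + 1 := by
      have := hilen
      simp [List.length_zipWith] at this
      omega
    rw [List.getElem_zipWith] at hEq
    rcases Sym2.eq_iff.mp hEq with ⟨h1, h2⟩ | ⟨h1, h2⟩
    · -- (c₁::l')[i] = c
      exact hcmem (h1 ▸ List.getElem_mem _)
    · -- (c₁::l')[i] = c₁ and (l'++[c])[i] = c
      have hnd₁ : (c₁ :: l').Nodup := hnodup.of_cons
      have hi0 : i = 0 := by
        have h0 : (c₁ :: l')[0]'(by simp) = c₁ := rfl
        exact (hnd₁.getElem_inj_iff (hi := by simpa using hlz) (hj := by simp)).mp (h1.trans h0.symm)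
      subst hi0
      cases l' with
      | nil => simp at hlen
      | cons a t =>
          have : a = c := by simpa using h2
          exact hcmem (by simp [this])
  have hcyc : (Walk.cons hadj1 q).IsCycle := (Walk.cons_isCycle_iff q hadj1).mpr ⟨hqpath, hqe⟩
  have hhc : (Walk.cons hadj1 q).IsHamiltonianCycle := by
    rw [Walk.isHamiltonianCycle_iff_isCycle_and_support_count_tail_eq_one]
    refine ⟨hcyc, fun u => ?_⟩
    have hsup : (Walk.cons hadj1 q).support.tail = c₁ :: (l' ++ [c]) := by
      rw [Walk.support_cons, List.tail_cons, hqsup]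
    rw [hsup]
    have hperm : (c₁ :: (l' ++ [c])).Perm (c :: c₁ :: l') := by
      refine (List.Perm.cons c₁ (List.perm_append_singleton c l')).trans ?_
      exact List.Perm.swap c c₁ l'
    rw [hperm.count_eq]
    exact List.count_eq_one_of_mem hnodup (hcov u)
  intro _
  exact ⟨c, Walk.cons hadj1 q, hhc⟩


lemma chain'_seg (S : ℕ → ℕ → Prop) (a m : ℕ) (h : ∀ i, a ≤ i → i + 2 ≤ a + m → S i (i+1)) :
    List.Chain' S (List.range' a m) := by
  refine List.isChain_iff_getElem.mpr ?_
  intro i hi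
  simp only [List.length_range'] at hi
  simp only [List.get_eq_getElem, List.getElem_range', one_mul]
  exact h (a + i) (by omega) (by omega)

lemma chain'_seg_rev (S : ℕ → ℕ → Prop) (a m : ℕ) (h : ∀ i, a ≤ i → i + 2 ≤ a + m → S (i+1) i) :
    List.Chain' S (List.range' a m).reverse :=
  List.isChain_reverse.mpr (chain'_seg _ a m h)

lemma seg_head? (a m : ℕ) (h : 0 < m) : (List.range' a m).head? = some a := by
  obtain ⟨m', rfl⟩ : ∃ m', m = m' + 1 := ⟨m - 1, by omega⟩
  rw [List.range'_succ]; rfl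

lemma seg_getLast? (a m : ℕ) (h : 0 < m) : (List.range' a m).getLast? = some (a + m - 1) := by
  rw [List.getLast?_eq_getElem?, List.length_range',
    List.getElem?_eq_getElem (by rw [List.length_range']; omega)]
  simp only [List.getElem_range', one_mul]
  exact congrArg some (by omega)

lemma chain'_glue {S : ℕ → ℕ → Prop} {l₁ l₂ : List ℕ} {p q : ℕ}
    (h₁ : List.Chain' S l₁) (h₂ : List.Chain' S l₂)
    (hp : l₁.getLast? = some p) (hq : l₂.head? = some q) (hpq : S p q) :
    List.Chain' S (l₁ ++ l₂) := by
  show List.IsChain S (l₁ ++ l₂); rw [List.isChain_append]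
  refine ⟨h₁, h₂, fun a ha b hb => ?_⟩
  rw [hp] at ha; rw [hq] at hb
  simp only [Option.mem_some_iff] at ha hb
  subst ha; subst hb; exact hpq

lemma seg_append (a m k : ℕ) : List.range' a m ++ List.range' (a + m) k = List.range' a (m + k) := by
  have := List.range'_append (s := a) (m := m) (n := k) (step := 1)
  simp only [one_mul] at this
  rw [this]


example {α} (R : α → α → Prop) (a : α) (l : List α) : List.Chain' R (a :: l) ↔ List.Chain R a l := Iff.rfl

section Rules

variable {V : Type*} [DecidableEq V] [Fintype V] {G : SimpleGraph V} {x y : V} {n : ℕ} {v : ℕ → V}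

lemma ham_cycle
    (hham : ¬ G.IsHamiltonian)
    (hinj : ∀ i j, i < n → j < n → v i = v j → i = j)
    (hsurj : ∀ u, ∃ i, i < n ∧ v i = u)
    (hn3 : 3 ≤ n)
    (C' : List ℕ) (hperm : (0 :: C').Perm (List.range n))
    (hch : List.Chain (fun a b => G.Adj (v a) (v b)) 0 (C' ++ [0])) : False := by
  apply hham
  have hmemn : ∀ i ∈ (0 :: C'), i < n := fun i hi => List.mem_range.mp (hperm.mem_iff.mp hi)
  apply isHamiltonian_of_cycle_list (v 0) (C'.map v)
  · have h2 := (List.isChain_map (R := G.Adj) v (l := 0 :: (C' ++ [0]))).mpr hch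
    rw [List.map_cons, List.map_append] at h2; exact h2
  · have hnd : (0 :: C').Nodup := hperm.nodup_iff.mpr (List.nodup_range (n := n))
    have h3 : ((0 :: C').map v).Nodup :=
      hnd.map_on (fun i hi j hj hij => hinj i j (hmemn i hi) (hmemn j hj) hij)
    simpa using h3
  · intro u
    obtain ⟨i, hi, rfl⟩ := hsurj u
    have h4 : i ∈ (0 :: C') := hperm.mem_iff.mpr (List.mem_range.mpr hi)
    simpa using List.mem_map_of_mem (f := v) h4
  · have h5 : (0 :: C').length = n := by rw [hperm.length_eq, List.length_range]
    simp only [List.length_cons] at h5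
    rw [List.length_map]
    omega

lemma rule1
    (hham : ¬ G.IsHamiltonian)
    (hv0 : v 0 = x) (hvl : v (n-1) = y)
    (hadj : ∀ i, i + 1 < n → G.Adj (v i) (v (i+1)))
    (hinj : ∀ i j, i < n → j < n → v i = v j → i = j)
    (hsurj : ∀ u, ∃ i, i < n ∧ v i = u)
    (hn3 : 3 ≤ n)
    {i k : ℕ} (hik : i + 2 ≤ k) (hk : k ≤ n - 1)
    (hchord : G.Adj (v i) (v k))
    (hB : G.Adj x (v (i+1))) (hA : G.Adj y (v (k-1))) : False := by
  set S : ℕ → ℕ → Prop := fun a b => G.Adj (v a) (v b) with hS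
  set s₁ : List ℕ := List.range' 0 (i+1) with hs₁
  set s₂ : List ℕ := List.range' k (n - k) with hs₂
  set s₃ : List ℕ := (List.range' (i+1) (k - 1 - i)).reverse with hs₃
  have c₁ : List.Chain' S s₁ := chain'_seg S 0 (i+1) (fun j h1 h2 => hadj j (by omega))
  have c₂ : List.Chain' S s₂ := chain'_seg S k (n-k) (fun j h1 h2 => hadj j (by omega))
  have c₃ : List.Chain' S s₃ := chain'_seg_rev S (i+1) (k-1-i) (fun j h1 h2 => (hadj j (by omega)).symm)
  have g₁ : List.Chain' S (s₁ ++ s₂) := by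
    refine chain'_glue c₁ c₂ (p := i) (q := k) ?_ (seg_head? _ _ (by omega)) hchord
    rw [seg_getLast? _ _ (by omega)]
    exact congrArg some (by omega)
  have g₂ : List.Chain' S ((s₁ ++ s₂) ++ s₃) := by
    refine chain'_glue g₁ c₃ (p := n-1) (q := k-1) ?_ ?_ ?_
    · rw [List.getLast?_append, hs₂, seg_getLast? _ _ (by omega)]
      simp only [Option.some_or]
      exact congrArg some (by omega)
    · rw [hs₃, List.head?_reverse, seg_getLast? _ _ (by omega)]
      exact congrArg some (by omega)
    · show G.Adj (v (n-1)) (v (k-1))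
      rw [hvl]; exact hA
  have g₃ : List.Chain' S (((s₁ ++ s₂) ++ s₃) ++ [0]) := by
    refine chain'_glue g₂ (List.isChain_singleton 0) (p := i+1) (q := 0) ?_ rfl ?_
    · rw [List.getLast?_append, hs₃, List.getLast?_reverse, seg_head? _ _ (by omega)]
      rfl
    · show G.Adj (v (i+1)) (v 0)
      rw [hv0]; exact hB.symm
  -- decompose as 0 :: C'
  set C' : List ℕ := (List.range' 1 i ++ s₂) ++ s₃ with hC'
  have hdec : ((s₁ ++ s₂) ++ s₃) = 0 :: C' := by
    rw [hs₁, show i + 1 = i + 1 from rfl, List.range'_succ]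
    simp [hC', List.append_assoc]
  have hperm : (0 :: C').Perm (List.range n) := by
    rw [← hdec]
    have p3 : s₃.Perm (List.range' (i+1) (k-1-i)) := List.reverse_perm _
    have step1 : ((s₁ ++ s₂) ++ s₃).Perm ((s₁ ++ s₂) ++ List.range' (i+1) (k-1-i)) :=
      List.Perm.append_left _ p3
    refine step1.trans ?_
    have step2 : ((s₁ ++ s₂) ++ List.range' (i+1) (k-1-i)).Perm
        (s₁ ++ (List.range' (i+1) (k-1-i) ++ s₂)) := by
      rw [List.append_assoc]
      exact List.Perm.append_left s₁ List.perm_append_comm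
    refine step2.trans ?_
    have e1 : List.range' (i+1) (k-1-i) ++ s₂ = List.range' (i+1) (n-1-i) := by
      rw [hs₂]
      have h := seg_append (i+1) (k-1-i) (n-k)
      rw [show (i+1) + (k-1-i) = k by omega] at h
      rw [h]
      exact congrArg (List.range' (i+1)) (by omega : (k-1-i) + (n-k) = n-1-i)
    rw [e1, hs₁]
    have e2 : List.range' 0 (i+1) ++ List.range' (i+1) (n-1-i) = List.range' 0 n := by
      have h := seg_append 0 (i+1) (n-1-i)
      rw [show 0 + (i+1) = i + 1 by omega] at h
      rw [h]
      exact congrArg (List.range' 0) (by omega : (i+1) + (n-1-i) = n)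
    rw [e2, ← List.range_eq_range']
  have hch : List.Chain S 0 (C' ++ [0]) := by
    have := g₃
    rw [hdec] at this
    exact this
  exact ham_cycle hham hinj hsurj hn3 C' hperm hch

lemma rule0
    (hham : ¬ G.IsHamiltonian)
    (hv0 : v 0 = x) (hvl : v (n-1) = y)
    (hadj : ∀ i, i + 1 < n → G.Adj (v i) (v (i+1)))
    (hinj : ∀ i j, i < n → j < n → v i = v j → i = j)
    (hsurj : ∀ u, ∃ i, i < n ∧ v i = u)
    (hn3 : 3 ≤ n)
    {i : ℕ} (hi : i ≤ n - 2)
    (hA : G.Adj y (v i)) (hB : G.Adj x (v (i+1))) : False := by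
  set S : ℕ → ℕ → Prop := fun a b => G.Adj (v a) (v b) with hS
  set s₁ : List ℕ := List.range' 0 (i+1) with hs₁
  set s₃ : List ℕ := (List.range' (i+1) (n-1-i)).reverse with hs₃
  have c₁ : List.Chain' S s₁ := chain'_seg S 0 (i+1) (fun j h1 h2 => hadj j (by omega))
  have c₃ : List.Chain' S s₃ := chain'_seg_rev S (i+1) (n-1-i) (fun j h1 h2 => (hadj j (by omega)).symm)
  have g₁ : List.Chain' S (s₁ ++ s₃) := by
    refine chain'_glue c₁ c₃ (p := i) (q := n-1) ?_ ?_ ?_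
    · rw [seg_getLast? _ _ (by omega)]
      exact congrArg some (by omega)
    · rw [hs₃, List.head?_reverse, seg_getLast? _ _ (by omega)]
      exact congrArg some (by omega)
    · show G.Adj (v i) (v (n-1))
      rw [hvl]; exact hA.symm
  have g₃ : List.Chain' S ((s₁ ++ s₃) ++ [0]) := by
    refine chain'_glue g₁ (List.isChain_singleton 0) (p := i+1) (q := 0) ?_ rfl ?_
    · rw [List.getLast?_append, hs₃, List.getLast?_reverse, seg_head? _ _ (by omega)]
      rfl
    · show G.Adj (v (i+1)) (v 0)
      rw [hv0]; exact hB.symm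
  set C' : List ℕ := List.range' 1 i ++ s₃ with hC'
  have hdec : (s₁ ++ s₃) = 0 :: C' := by
    rw [hs₁, List.range'_succ]
    simp [hC']
  have hperm : (0 :: C').Perm (List.range n) := by
    rw [← hdec]
    have p3 : s₃.Perm (List.range' (i+1) (n-1-i)) := List.reverse_perm _
    refine (List.Perm.append_left _ p3).trans ?_
    rw [hs₁]
    have h := seg_append 0 (i+1) (n-1-i)
    rw [show 0 + (i+1) = i + 1 by omega] at h
    rw [h, show (i+1) + (n-1-i) = n by omega, ← List.range_eq_range']
  have hch : List.Chain S 0 (C' ++ [0]) := by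
    have hg := g₃
    rw [hdec] at hg
    exact hg
  exact ham_cycle hham hinj hsurj hn3 C' hperm hch

lemma rule3
    (hham : ¬ G.IsHamiltonian)
    (hv0 : v 0 = x) (hvl : v (n-1) = y)
    (hadj : ∀ i, i + 1 < n → G.Adj (v i) (v (i+1)))
    (hinj : ∀ i j, i < n → j < n → v i = v j → i = j)
    (hsurj : ∀ u, ∃ i, i < n ∧ v i = u)
    (hn3 : 3 ≤ n)
    {i k : ℕ} (hik : i + 2 ≤ k) (hk : k ≤ n - 2)
    (hchord : G.Adj (v i) (v k))
    (hA : G.Adj y (v (i+1))) (hB : G.Adj x (v (k+1))) : False := by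
  set S : ℕ → ℕ → Prop := fun a b => G.Adj (v a) (v b) with hS
  set s₁ : List ℕ := List.range' 0 (i+1) with hs₁
  set s₂ : List ℕ := (List.range' (i+1) (k-i)).reverse with hs₂
  set s₃ : List ℕ := (List.range' (k+1) (n-1-k)).reverse with hs₃
  have c₁ : List.Chain' S s₁ := chain'_seg S 0 (i+1) (fun j h1 h2 => hadj j (by omega))
  have c₂ : List.Chain' S s₂ := chain'_seg_rev S (i+1) (k-i) (fun j h1 h2 => (hadj j (by omega)).symm)
  have c₃ : List.Chain' S s₃ := chain'_seg_rev S (k+1) (n-1-k) (fun j h1 h2 => (hadj j (by omega)).symm)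
  have g₁ : List.Chain' S (s₁ ++ s₂) := by
    refine chain'_glue c₁ c₂ (p := i) (q := k) ?_ ?_ hchord
    · rw [seg_getLast? _ _ (by omega)]
      exact congrArg some (by omega)
    · rw [hs₂, List.head?_reverse, seg_getLast? _ _ (by omega)]
      exact congrArg some (by omega)
  have g₂ : List.Chain' S ((s₁ ++ s₂) ++ s₃) := by
    refine chain'_glue g₁ c₃ (p := i+1) (q := n-1) ?_ ?_ ?_
    · rw [List.getLast?_append, hs₂, List.getLast?_reverse, seg_head? _ _ (by omega)]
      rfl
    · rw [hs₃, List.head?_reverse, seg_getLast? _ _ (by omega)]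
      exact congrArg some (by omega)
    · show G.Adj (v (i+1)) (v (n-1))
      rw [hvl]; exact hA.symm
  have g₃ : List.Chain' S (((s₁ ++ s₂) ++ s₃) ++ [0]) := by
    refine chain'_glue g₂ (List.isChain_singleton 0) (p := k+1) (q := 0) ?_ rfl ?_
    · rw [List.getLast?_append, hs₃, List.getLast?_reverse, seg_head? _ _ (by omega)]
      rfl
    · show G.Adj (v (k+1)) (v 0)
      rw [hv0]; exact hB.symm
  set C' : List ℕ := (List.range' 1 i ++ s₂) ++ s₃ with hC'
  have hdec : ((s₁ ++ s₂) ++ s₃) = 0 :: C' := by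
    rw [hs₁, List.range'_succ]
    simp [hC', List.append_assoc]
  have hperm : (0 :: C').Perm (List.range n) := by
    rw [← hdec]
    have p2 : s₂.Perm (List.range' (i+1) (k-i)) := List.reverse_perm _
    have p3 : s₃.Perm (List.range' (k+1) (n-1-k)) := List.reverse_perm _
    refine (((List.Perm.refl s₁).append p2).append p3).trans ?_
    have e1 : s₁ ++ List.range' (i+1) (k-i) = List.range' 0 (k+1) := by
      rw [hs₁]
      have h := seg_append 0 (i+1) (k-i)
      rw [show 0 + (i+1) = i + 1 by omega] at h
      rw [h]
      exact congrArg (List.range' 0) (by omega : (i+1) + (k-i) = k+1)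
    rw [e1]
    have e2 : List.range' 0 (k+1) ++ List.range' (k+1) (n-1-k) = List.range' 0 n := by
      have h := seg_append 0 (k+1) (n-1-k)
      rw [show 0 + (k+1) = k + 1 by omega] at h
      rw [h]
      exact congrArg (List.range' 0) (by omega : (k+1) + (n-1-k) = n)
    rw [e2, ← List.range_eq_range']
  have hch : List.Chain S 0 (C' ++ [0]) := by
    have hg := g₃
    rw [hdec] at hg
    exact hg
  exact ham_cycle hham hinj hsurj hn3 C' hperm hch

lemma rule4
    (hham : ¬ G.IsHamiltonian)
    (hv0 : v 0 = x) (hvl : v (n-1) = y)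
    (hadj : ∀ i, i + 1 < n → G.Adj (v i) (v (i+1)))
    (hinj : ∀ i j, i < n → j < n → v i = v j → i = j)
    (hsurj : ∀ u, ∃ i, i < n ∧ v i = u)
    (hn3 : 3 ≤ n)
    {i k : ℕ} (hi1 : 1 ≤ i) (hik : i + 2 ≤ k) (hk : k ≤ n - 1)
    (hchord : G.Adj (v i) (v k))
    (hA : G.Adj y (v (i-1))) (hB : G.Adj x (v (k-1))) : False := by
  set S : ℕ → ℕ → Prop := fun a b => G.Adj (v a) (v b) with hS
  set s₁ : List ℕ := List.range' 0 i with hs₁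
  set s₂ : List ℕ := (List.range' k (n-k)).reverse with hs₂
  set s₃ : List ℕ := List.range' i (k-i) with hs₃
  have c₁ : List.Chain' S s₁ := chain'_seg S 0 i (fun j h1 h2 => hadj j (by omega))
  have c₂ : List.Chain' S s₂ := chain'_seg_rev S k (n-k) (fun j h1 h2 => (hadj j (by omega)).symm)
  have c₃ : List.Chain' S s₃ := chain'_seg S i (k-i) (fun j h1 h2 => hadj j (by omega))
  have g₁ : List.Chain' S (s₁ ++ s₂) := by
    refine chain'_glue c₁ c₂ (p := i-1) (q := n-1) ?_ ?_ ?_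
    · rw [seg_getLast? _ _ (by omega)]
      exact congrArg some (by omega)
    · rw [hs₂, List.head?_reverse, seg_getLast? _ _ (by omega)]
      exact congrArg some (by omega)
    · show G.Adj (v (i-1)) (v (n-1))
      rw [hvl]; exact hA.symm
  have g₂ : List.Chain' S ((s₁ ++ s₂) ++ s₃) := by
    refine chain'_glue g₁ c₃ (p := k) (q := i) ?_ ?_ hchord.symm
    · rw [List.getLast?_append, hs₂, List.getLast?_reverse, seg_head? _ _ (by omega)]
      rfl
    · rw [hs₃, seg_head? _ _ (by omega)]
  have g₃ : List.Chain' S (((s₁ ++ s₂) ++ s₃) ++ [0]) := by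
    refine chain'_glue g₂ (List.isChain_singleton 0) (p := k-1) (q := 0) ?_ rfl ?_
    · rw [List.getLast?_append, hs₃, seg_getLast? _ _ (by omega)]
      simp only [Option.some_or]
      exact congrArg some (by omega)
    · show G.Adj (v (k-1)) (v 0)
      rw [hv0]; exact hB.symm
  set C' : List ℕ := (List.range' 1 (i-1) ++ s₂) ++ s₃ with hC'
  have hdec : ((s₁ ++ s₂) ++ s₃) = 0 :: C' := by
    rw [hs₁, show i = (i-1) + 1 by omega, List.range'_succ]
    simp [hC', List.append_assoc]
  have hperm : (0 :: C').Perm (List.range n) := by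
    rw [← hdec]
    have p2 : s₂.Perm (List.range' k (n-k)) := List.reverse_perm _
    refine ((List.Perm.append_left s₁ p2).append (List.Perm.refl s₃)).trans ?_
    have step2 : ((s₁ ++ List.range' k (n-k)) ++ s₃).Perm ((s₁ ++ s₃) ++ List.range' k (n-k)) := by
      rw [List.append_assoc, List.append_assoc]
      exact List.Perm.append_left s₁ List.perm_append_comm
    refine step2.trans ?_
    have e1 : s₁ ++ s₃ = List.range' 0 k := by
      rw [hs₁, hs₃]
      have h := seg_append 0 i (k-i)
      rw [show 0 + i = i by omega] at h
      rw [h]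
      exact congrArg (List.range' 0) (by omega : i + (k-i) = k)
    rw [e1]
    have e2 : List.range' 0 k ++ List.range' k (n-k) = List.range' 0 n := by
      have h := seg_append 0 k (n-k)
      rw [show 0 + k = k by omega] at h
      rw [h]
      exact congrArg (List.range' 0) (by omega : k + (n-k) = n)
    rw [e2, ← List.range_eq_range']
  have hch : List.Chain S 0 (C' ++ [0]) := by
    have hg := g₃
    rw [hdec] at hg
    exact hg
  exact ham_cycle hham hinj hsurj hn3 C' hperm hch

end Rules

lemma interval_ind (P : ℕ → Prop) (l r : ℕ) (hbase : P l)
    (hstep : ∀ i, l ≤ i → i < r → P i → P (i+1)) : ∀ i, l ≤ i → i ≤ r → P i := by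
  intro i hli
  induction i, hli using Nat.le_induction with
  | base => intro _; exact hbase
  | succ i hli ih => intro h; exact hstep i hli (by omega) (ih (by omega))

end Stmt14Aux

namespace Stmt14Aux

lemma cut_contra {V : Type*} [Fintype V] [DecidableEq V] {G : SimpleGraph V}
    {ε : ℝ} (hε : 1 / 4 < ε) (htough : Tough (2 + ε) G)
    (T : Finset V) (hT : T.card ≤ 4) (Q : V → Prop) (a b : V)
    (ha : a ∉ T) (hb : b ∉ T) (hQa : Q a) (hQb : ¬ Q b)
    (hsep : ∀ u w, u ∉ T → w ∉ T → G.Adj u w → (Q u ↔ Q w)) : False := by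
  set H := G.induce ((↑T : Set V)ᶜ) with hH
  have hmem : ∀ c : ((↑T : Set V)ᶜ : Set V), (c : V) ∉ T := by
    intro c h
    exact c.2 (Finset.mem_coe.mpr h)
  have key : ∀ c e : ((↑T : Set V)ᶜ : Set V), H.Reachable c e → (Q c ↔ Q e) := by
    intro c e hr
    obtain ⟨w⟩ := hr
    induction w with
    | nil => exact Iff.rfl
    | cons hadj p ih =>
        refine (hsep _ _ (hmem _) (hmem _) ?_).trans ih
        exact hadj
  have ha' : a ∈ ((↑T : Set V)ᶜ : Set V) := by simpa using ha
  have hb' : b ∈ ((↑T : Set V)ᶜ : Set V) := by simpa using hb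
  have hnotr : ¬ H.Reachable ⟨a, ha'⟩ ⟨b, hb'⟩ := by
    intro hr
    exact hQb ((key _ _ hr).mp hQa)
  have hnc : ¬ H.Connected := by
    intro hc
    exact hnotr (hc.preconnected _ _)
  have hle := htough T hnc
  haveI : Finite H.ConnectedComponent := Quot.finite _
  have hcard2 : 2 ≤ Nat.card H.ConnectedComponent := by
    have hne : H.connectedComponentMk ⟨a, ha'⟩ ≠ H.connectedComponentMk ⟨b, hb'⟩ := by
      intro h
      exact hnotr (SimpleGraph.ConnectedComponent.eq.mp h)
    have : Nontrivial H.ConnectedComponent := ⟨_, _, hne⟩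
    have := Finite.one_lt_card_iff_nontrivial.mpr this
    omega
  have hc2 : (2 : ℝ) ≤ (Nat.card H.ConnectedComponent : ℝ) := by
    exact_mod_cast hcard2
  have hT4 : (T.card : ℝ) ≤ 4 := by exact_mod_cast hT
  nlinarith [hle, hc2, hT4, hε]

end Stmt14Aux




/-- Let `ε > 1/4` be a real number and let `G` be a `(2+ε)`-tough non-Hamiltonian
graph on `n ≥ 3` vertices possessing a Hamiltonian path from `x` to `y`, where `x` and
`y` are non-adjacent vertices with `d(x) + d(y) = n - 2`. Let `D = N(x) ∩ N(y)` and
let `S` be the set of vertices (other than `x` and `y`) adjacent to neither `x` nor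
`y`. Then `|S| = |D|` and `|D| ≥ 2`. -/
theorem stmt_14 {V : Type*} [Fintype V] [DecidableEq V]
    (ε : ℝ) (hε : 1 / 4 < ε)
    (hn : 3 ≤ Fintype.card V)
    (G : SimpleGraph V) [DecidableRel G.Adj]
    (htough : Tough (2 + ε) G) (hham : ¬ G.IsHamiltonian)
    (x y : V) (p : G.Walk x y) (hp : p.IsHamiltonian)
    (hxy : x ≠ y) (hnadj : ¬ G.Adj x y)
    (hdeg : G.degree x + G.degree y = Fintype.card V - 2)
    (D S : Set V)
    (hD : D = G.neighborSet x ∩ G.neighborSet y)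
    (hS : S = {w | w ≠ x ∧ w ≠ y ∧ ¬ G.Adj w x ∧ ¬ G.Adj w y}) :
    S.ncard = D.ncard ∧ 2 ≤ D.ncard := by
  classical
  set n := Fintype.card V with hncard
  have hn3 : 3 ≤ n := hn
  -- ### Part 1 : |S| = |D|
  set Df := G.neighborFinset x ∩ G.neighborFinset y with hDf
  set Sf := Finset.univ.filter (fun w => w ≠ x ∧ w ≠ y ∧ ¬ G.Adj w x ∧ ¬ G.Adj w y) with hSf
  have hDfin : D = ↑Df := by
    rw [hD, hDf, Finset.coe_inter, SimpleGraph.neighborFinset_def,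
      SimpleGraph.neighborFinset_def, Set.coe_toFinset, Set.coe_toFinset]
  have hSfin : S = ↑Sf := by
    rw [hS]
    ext z
    simp [hSf]
  have hDcard : D.ncard = Df.card := by rw [hDfin]; exact Set.ncard_coe_finset _
  have hScard : S.ncard = Sf.card := by rw [hSfin]; exact Set.ncard_coe_finset _
  have hsub : G.neighborFinset x ∪ G.neighborFinset y ⊆ Finset.univ \ {x, y} := by
    intro z hz
    simp only [Finset.mem_union, SimpleGraph.mem_neighborFinset] at hz
    simp only [Finset.mem_sdiff, Finset.mem_univ, Finset.mem_insert, Finset.mem_singleton,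
      true_and]
    push_neg
    constructor
    · rintro rfl
      rcases hz with h | h
      · exact G.irrefl h
      · exact hnadj h.symm
    · rintro rfl
      rcases hz with h | h
      · exact hnadj h
      · exact G.irrefl h
  have hunivc : (Finset.univ \ ({x, y} : Finset V)).card = n - 2 := by
    rw [Finset.card_sdiff_of_subset (by simp)]
    rw [Finset.card_univ, Finset.card_insert_of_notMem (by simpa using hxy), Finset.card_singleton]
  have hSfeq : Sf = (Finset.univ \ {x, y}) \ (G.neighborFinset x ∪ G.neighborFinset y) := by
    ext z
    simp only [hSf, Finset.mem_filter, Finset.mem_univ, true_and, Finset.mem_sdiff,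
      Finset.mem_union, SimpleGraph.mem_neighborFinset, Finset.mem_insert, Finset.mem_singleton]
    constructor
    · rintro ⟨h1, h2, h3, h4⟩
      push_neg
      exact ⟨⟨h1, h2⟩, fun h => h3 h.symm, fun h => h4 h.symm⟩
    · intro h
      push_neg at h
      obtain ⟨⟨h1, h2⟩, h3, h4⟩ := h
      exact ⟨h1, h2, fun h => h3 h.symm, fun h => h4 h.symm⟩
  have hdegsum : (G.neighborFinset x).card + (G.neighborFinset y).card = n - 2 := by
    rw [G.card_neighborFinset_eq_degree, G.card_neighborFinset_eq_degree]
    exact hdeg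
  have huninter : (G.neighborFinset x ∪ G.neighborFinset y).card + Df.card = n - 2 := by
    rw [hDf, Finset.card_union_add_card_inter]
    exact hdegsum
  have hunle : (G.neighborFinset x ∪ G.neighborFinset y).card ≤ n - 2 := by
    have h := Finset.card_le_card hsub
    omega
  have hSD : Sf.card = Df.card := by
    have h1 : Sf.card = (n - 2) - (G.neighborFinset x ∪ G.neighborFinset y).card := by
      rw [hSfeq, Finset.card_sdiff_of_subset hsub, hunivc]
    omega
  refine ⟨by rw [hScard, hDcard, hSD], ?_⟩
  -- ### Path indexing setup
  by_contra hD2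
  push_neg at hD2
  rw [hDcard] at hD2
  have hDle1 : Df.card ≤ 1 := by omega
  set L := p.support with hLdef
  have hLlen : L.length = n := by
    rw [hLdef, SimpleGraph.Walk.length_support, hp.length_eq]
    omega
  set v : ℕ → V := fun i => L.getD i x with hvdef
  have hnodupL : L.Nodup := hp.isPath.support_nodup
  have hLne : L ≠ [] := by
    intro h
    rw [h] at hLlen
    simp at hLlen
    omega
  have hgetD : ∀ i, i < n → v i = L.getD i x := fun i _ => rfl
  have hv0 : v 0 = x := by
    show L.getD 0 x = x
    rw [List.getD_eq_getElem L x (by omega), ← List.head_eq_getElem hLne]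
    exact SimpleGraph.Walk.head_support p
  have hvl : v (n-1) = y := by
    show L.getD (n-1) x = y
    have h2 : L.getLast hLne = y := SimpleGraph.Walk.getLast_support p
    rw [List.getLast_eq_getElem, ← List.getD_eq_getElem L x (by omega)] at h2
    rw [hLlen] at h2
    exact h2
  have hadjv : ∀ i, i + 1 < n → G.Adj (v i) (v (i+1)) := by
    intro i hi
    have hch := SimpleGraph.Walk.isChain_adj_support p
    rw [List.isChain_iff_getElem] at hch
    have := hch i (by rw [← hLdef, hLlen]; omega)
    show G.Adj (L.getD i x) (L.getD (i+1) x)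
    rw [List.getD_eq_getElem L x (by omega), List.getD_eq_getElem L x (by omega)]
    simpa using this
  have hinj : ∀ i j, i < n → j < n → v i = v j → i = j := by
    intro i j hi hj hij
    show i = j
    have h1 : L.getD i x = L.getD j x := hij
    rw [List.getD_eq_getElem L x (by omega), List.getD_eq_getElem L x (by omega)] at h1
    exact (hnodupL.getElem_inj_iff).mp h1
  have hsurj : ∀ u, ∃ i, i < n ∧ v i = u := by
    intro u
    have hu : u ∈ L := hp.mem_support u
    rw [List.mem_iff_getElem] at hu
    obtain ⟨i, hi, hiu⟩ := hu
    refine ⟨i, by omega, ?_⟩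
    show L.getD i x = u
    rw [List.getD_eq_getElem L x hi]
    exact hiu
  set pos : V → ℕ := fun u => Classical.choose (hsurj u) with hposdef
  have hposlt : ∀ u, pos u < n := fun u => (Classical.choose_spec (hsurj u)).1
  have hposv : ∀ u, v (pos u) = u := fun u => (Classical.choose_spec (hsurj u)).2
  have hposvi : ∀ i, i < n → pos (v i) = i := fun i hi => hinj _ _ (hposlt _) hi (hposv _)
  have hvx : ∀ i, i < n → v i = x → i = 0 := by
    intro i hi h
    exact hinj i 0 hi (by omega) (by rw [h, hv0])
  have hvy : ∀ i, i < n → v i = y → i = n-1 := by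
    intro i hi h
    exact hinj i (n-1) hi (by omega) (by rw [h, hvl])
  -- rules
  have R0 : ∀ i, i ≤ n-2 → G.Adj y (v i) → G.Adj x (v (i+1)) → False :=
    fun i h1 h2 h3 => Stmt14Aux.rule0 hham hv0 hvl hadjv hinj hsurj hn3 h1 h2 h3
  have R1 : ∀ i k, i+2 ≤ k → k ≤ n-1 → G.Adj (v i) (v k) → G.Adj x (v (i+1)) →
      G.Adj y (v (k-1)) → False :=
    fun i k h1 h2 h3 h4 h5 => Stmt14Aux.rule1 hham hv0 hvl hadjv hinj hsurj hn3 h1 h2 h3 h4 h5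
  have R3 : ∀ i k, i+2 ≤ k → k ≤ n-2 → G.Adj (v i) (v k) → G.Adj y (v (i+1)) →
      G.Adj x (v (k+1)) → False :=
    fun i k h1 h2 h3 h4 h5 => Stmt14Aux.rule3 hham hv0 hvl hadjv hinj hsurj hn3 h1 h2 h3 h4 h5
  have R4 : ∀ i k, 1 ≤ i → i+2 ≤ k → k ≤ n-1 → G.Adj (v i) (v k) → G.Adj y (v (i-1)) →
      G.Adj x (v (k-1)) → False :=
    fun i k h0 h1 h2 h3 h4 h5 => Stmt14Aux.rule4 hham hv0 hvl hadjv hinj hsurj hn3 h0 h1 h2 h3 h4 h5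
  -- basic adjacency facts
  have hB1 : G.Adj x (v 1) := by
    have := hadjv 0 (by omega)
    rwa [hv0] at this
  have hA2 : G.Adj y (v (n-2)) := by
    have := hadjv (n-2) (by omega)
    rw [show n-2+1 = n-1 by omega, hvl] at this
    exact this.symm
  -- ### the unique slack index
  have hdisj : Disjoint ((Finset.range (n-1)).filter (fun i => G.Adj y (v i)))
      ((Finset.range (n-1)).filter (fun i => G.Adj x (v (i+1)))) := by
    rw [Finset.disjoint_left]
    intro i h1 h2
    simp only [Finset.mem_filter, Finset.mem_range] at h1 h2
    exact R0 i (by omega) h1.2 h2.2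
  have hcA : ((Finset.range (n-1)).filter (fun i => G.Adj y (v i))).card = G.degree y := by
    rw [← G.card_neighborFinset_eq_degree]
    apply Finset.card_bij (fun i _ => v i)
    · intro a ha
      simp only [Finset.mem_filter] at ha
      exact (SimpleGraph.mem_neighborFinset _ _ _).mpr ha.2
    · intro a ha b hb h
      simp only [Finset.mem_filter, Finset.mem_range] at ha hb
      exact hinj a b (by omega) (by omega) h
    · intro u hu
      rw [SimpleGraph.mem_neighborFinset] at hu
      obtain ⟨i, hi, rfl⟩ := hsurj u
      have hine : i ≠ n-1 := by
        intro h
        rw [h, hvl] at hu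
        exact G.irrefl hu
      exact ⟨i, by simp only [Finset.mem_filter, Finset.mem_range]; exact ⟨by omega, hu⟩, rfl⟩
  have hcB : ((Finset.range (n-1)).filter (fun i => G.Adj x (v (i+1)))).card = G.degree x := by
    rw [← G.card_neighborFinset_eq_degree]
    apply Finset.card_bij (fun i _ => v (i+1))
    · intro a ha
      simp only [Finset.mem_filter] at ha
      exact (SimpleGraph.mem_neighborFinset _ _ _).mpr ha.2
    · intro a ha b hb h
      simp only [Finset.mem_filter, Finset.mem_range] at ha hb
      have := hinj (a+1) (b+1) (by omega) (by omega) h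
      omega
    · intro u hu
      rw [SimpleGraph.mem_neighborFinset] at hu
      obtain ⟨i, hi, rfl⟩ := hsurj u
      have hine : i ≠ 0 := by
        intro h
        rw [h, hv0] at hu
        exact G.irrefl hu
      have hmem : i - 1 ∈ (Finset.range (n-1)).filter (fun j => G.Adj x (v (j+1))) := by
        simp only [Finset.mem_filter, Finset.mem_range]
        refine ⟨by omega, ?_⟩
        rw [show i-1+1 = i by omega]
        exact hu
      exact ⟨i-1, hmem, by rw [show i-1+1 = i by omega]⟩
  have hcup : ((Finset.range (n-1)).filter
      (fun i => G.Adj y (v i) ∨ G.Adj x (v (i+1)))).card = n - 2 := by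
    rw [Finset.filter_or, Finset.card_union_of_disjoint hdisj, hcA, hcB]
    omega
  have hslack1 : ((Finset.range (n-1)).filter
      (fun i => ¬(G.Adj y (v i) ∨ G.Adj x (v (i+1))))).card = 1 := by
    have h := Finset.card_filter_add_card_filter_not
      (s := Finset.range (n-1)) (p := fun i => G.Adj y (v i) ∨ G.Adj x (v (i+1)))
    rw [Finset.card_range, hcup] at h
    omega
  obtain ⟨j₀, hj₀eq⟩ := Finset.card_eq_one.mp hslack1
  have hj₀mem : j₀ ∈ (Finset.range (n-1)).filter
      (fun i => ¬(G.Adj y (v i) ∨ G.Adj x (v (i+1)))) := by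
    rw [hj₀eq]; exact Finset.mem_singleton_self j₀
  simp only [Finset.mem_filter, Finset.mem_range] at hj₀mem
  obtain ⟨hj₀lt, hj₀nor⟩ := hj₀mem
  push_neg at hj₀nor
  obtain ⟨hj₀A, hj₀B⟩ := hj₀nor
  have hslk : ∀ i, i < n-1 → i ≠ j₀ → (G.Adj y (v i) ∨ G.Adj x (v (i+1))) := by
    intro i h1 h2
    by_contra h
    have : i ∈ (Finset.range (n-1)).filter
        (fun i => ¬(G.Adj y (v i) ∨ G.Adj x (v (i+1)))) := by
      simp only [Finset.mem_filter, Finset.mem_range]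
      exact ⟨h1, h⟩
    rw [hj₀eq, Finset.mem_singleton] at this
    exact h2 this
  have hj₀1 : 1 ≤ j₀ := by
    rcases Nat.eq_zero_or_pos j₀ with h | h
    · exfalso
      rw [h] at hj₀B
      exact hj₀B hB1
    · exact h
  have hj₀n3 : j₀ ≤ n-3 := by
    by_contra h
    have : j₀ = n-2 := by omega
    rw [this] at hj₀A
    exact hj₀A hA2
  have hDm : ∀ i, i < n → (v i ∈ Df ↔ (G.Adj x (v i) ∧ G.Adj y (v i))) := by
    intro i _
    rw [hDf]
    simp [Finset.mem_inter, SimpleGraph.mem_neighborFinset]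
  have hSm : ∀ i, 1 ≤ i → i ≤ n-2 → (v i ∈ Sf ↔ (¬ G.Adj x (v i) ∧ ¬ G.Adj y (v i))) := by
    intro i h1 h2
    rw [hSf]
    simp only [Finset.mem_filter, Finset.mem_univ, true_and]
    constructor
    · rintro ⟨_, _, h3, h4⟩
      exact ⟨fun h => h3 h.symm, fun h => h4 h.symm⟩
    · rintro ⟨h3, h4⟩
      refine ⟨fun h => ?_, fun h => ?_, fun h => h3 h.symm, fun h => h4 h.symm⟩
      · have := hvx i (by omega) h
        omega
      · have := hvy i (by omega) h
        omega
  rcases (by omega : Df.card = 0 ∨ Df.card = 1) with hDf0 | hDf1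
  · -- ### case |D| = 0
    have hDfe : Df = ∅ := Finset.card_eq_zero.mp hDf0
    have hSfe : Sf = ∅ := Finset.card_eq_zero.mp (by omega : Sf.card = 0)
    have hnoD : ∀ i, i < n → ¬(G.Adj x (v i) ∧ G.Adj y (v i)) := by
      intro i hi h
      have hmm := (hDm i hi).mpr h
      rw [hDfe] at hmm
      simp at hmm
    have horB : ∀ i, 1 ≤ i → i ≤ n-2 → (G.Adj x (v i) ∨ G.Adj y (v i)) := by
      intro i h1 h2
      by_contra h
      push_neg at h
      have hmm := (hSm i h1 h2).mpr ⟨h.1, h.2⟩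
      rw [hSfe] at hmm
      simp at hmm
    have hBlo : ∀ i, 1 ≤ i → i ≤ j₀ → G.Adj x (v i) := by
      refine Stmt14Aux.interval_ind _ 1 j₀ hB1 ?_
      intro i h1 h2 hBi
      have hnA : ¬ G.Adj y (v i) := fun hA => hnoD i (by omega) ⟨hBi, hA⟩
      rcases hslk i (by omega) (by omega) with h | h
      · exact absurd h hnA
      · exact h
    have hAhi : ∀ i, j₀+1 ≤ i → i ≤ n-2 → G.Adj y (v i) := by
      refine Stmt14Aux.interval_ind _ (j₀+1) (n-2) ?_ ?_
      · rcases horB (j₀+1) (by omega) (by omega) with h | h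
        · exact absurd h hj₀B
        · exact h
      · intro i h1 h2 hAi
        have hnB : ¬ G.Adj x (v (i+1)) := fun hB => R0 i (by omega) hAi hB
        rcases horB (i+1) (by omega) (by omega) with h | h
        · exact absurd h hnB
        · exact h
    set T : Finset V := {v j₀, v (j₀+1)} with hT
    have hTc : T.card ≤ 4 := le_trans (Finset.card_insert_le _ _) (by simp)
    have hnotT : ∀ u, u ∉ T → u ≠ v j₀ ∧ u ≠ v (j₀+1) := by
      intro u hu
      rw [hT] at hu
      simp only [Finset.mem_insert, Finset.mem_singleton] at hu
      push_neg at hu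
      exact hu
    have hxT : x ∉ T := by
      rw [hT]
      simp only [Finset.mem_insert, Finset.mem_singleton]
      push_neg
      constructor
      · intro h
        have := hvx j₀ (by omega) h.symm
        omega
      · intro h
        have := hvx (j₀+1) (by omega) h.symm
        omega
    have hyT : y ∉ T := by
      rw [hT]
      simp only [Finset.mem_insert, Finset.mem_singleton]
      push_neg
      constructor
      · intro h
        have := hvy j₀ (by omega) h.symm
        omega
      · intro h
        have := hvy (j₀+1) (by omega) h.symm
        omega
    have main : ∀ u w, u ∉ T → w ∉ T → G.Adj u w → pos u < j₀ → j₀ < pos w → False := by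
      intro u w hu hw hadj hiu hkw
      obtain ⟨hw1, hw2⟩ := hnotT w hw
      have hk1 : pos w ≠ j₀ + 1 := by
        intro h
        apply hw2
        rw [← h, hposv]
      have hchord : G.Adj (v (pos u)) (v (pos w)) := by
        rw [hposv, hposv]
        exact hadj
      exact R1 (pos u) (pos w) (by omega) (by have := hposlt w; omega) hchord
        (hBlo (pos u + 1) (by omega) (by omega))
        (hAhi (pos w - 1) (by omega) (by have := hposlt w; omega))
    refine Stmt14Aux.cut_contra hε htough T hTc (fun u => pos u < j₀) x y hxT hyT ?_ ?_ ?_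
    · show pos x < j₀
      rw [show pos x = 0 from by rw [← hv0, hposvi 0 (by omega)]]
      omega
    · show ¬ pos y < j₀
      rw [show pos y = n-1 from by rw [← hvl, hposvi (n-1) (by omega)]]
      omega
    · intro u w hu hw hadj
      show pos u < j₀ ↔ pos w < j₀
      constructor
      · intro h
        by_contra hk
        have hk2 : pos w ≠ j₀ := by
          intro hh
          exact (hnotT w hw).1 (by rw [← hh, hposv])
        exact absurd (main u w hu hw hadj h (by omega)) (by simp)
      · intro h
        by_contra hk
        have hk2 : pos u ≠ j₀ := by
          intro hh
          exact (hnotT u hu).1 (by rw [← hh, hposv])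
        exact absurd (main w u hw hu hadj.symm h (by omega)) (by simp)
  · -- ### case |D| = 1
    have hSf1 : Sf.card = 1 := by omega
    obtain ⟨z₀, hDfe⟩ := Finset.card_eq_one.mp hDf1
    obtain ⟨w₀, hSfe⟩ := Finset.card_eq_one.mp hSf1
    set d := pos z₀ with hd
    set s := pos w₀ with hs
    have hvd : v d = z₀ := hposv z₀
    have hvs : v s = w₀ := hposv w₀
    have hdlt : d < n := hposlt z₀
    have hslt : s < n := hposlt w₀
    have hz₀mem : z₀ ∈ Df := by rw [hDfe]; exact Finset.mem_singleton_self _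
    have hw₀mem : w₀ ∈ Sf := by rw [hSfe]; exact Finset.mem_singleton_self _
    have hz₀' : G.Adj x z₀ ∧ G.Adj y z₀ := by
      rw [hDf] at hz₀mem
      simpa [Finset.mem_inter, SimpleGraph.mem_neighborFinset] using hz₀mem
    have hBd : G.Adj x (v d) := by rw [hvd]; exact hz₀'.1
    have hAd : G.Adj y (v d) := by rw [hvd]; exact hz₀'.2
    have hw₀' : w₀ ≠ x ∧ w₀ ≠ y ∧ ¬ G.Adj w₀ x ∧ ¬ G.Adj w₀ y := by
      rw [hSf] at hw₀mem
      simpa using hw₀mem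
    have hnBs : ¬ G.Adj x (v s) := by rw [hvs]; exact fun h => hw₀'.2.2.1 h.symm
    have hnAs : ¬ G.Adj y (v s) := by rw [hvs]; exact fun h => hw₀'.2.2.2 h.symm
    have hd1 : 1 ≤ d := by
      rcases Nat.eq_zero_or_pos d with h | h
      · exfalso
        rw [h, hv0] at hBd
        exact G.irrefl hBd
      · exact h
    have hdn2 : d ≤ n-2 := by
      by_contra h
      have hde : d = n-1 := by omega
      rw [hde, hvl] at hAd
      exact G.irrefl hAd
    have hs2 : 2 ≤ s := by
      by_contra h
      have hs0 : s ≠ 0 := fun hh => hw₀'.1 (by rw [← hvs, hh, hv0])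
      have hseq : s = 1 := by omega
      rw [hseq] at hnBs
      exact hnBs hB1
    have hsn3 : s ≤ n-3 := by
      have hsn1 : s ≠ n-1 := fun hh => hw₀'.2.1 (by rw [← hvs, hh, hvl])
      by_contra h
      have hseq : s = n-2 := by omega
      rw [hseq] at hnAs
      exact hnAs hA2
    have hDuniq : ∀ i, i < n → G.Adj x (v i) → G.Adj y (v i) → i = d := by
      intro i hi h1 h2
      have hm : v i ∈ Df := (hDm i hi).mpr ⟨h1, h2⟩
      rw [hDfe, Finset.mem_singleton] at hm
      exact hinj i d hi hdlt (by rw [hm, hvd])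
    have hSuniq : ∀ i, 1 ≤ i → i ≤ n-2 → ¬ G.Adj x (v i) → ¬ G.Adj y (v i) → i = s := by
      intro i h1 h2 h3 h4
      have hm : v i ∈ Sf := (hSm i h1 h2).mpr ⟨h3, h4⟩
      rw [hSfe, Finset.mem_singleton] at hm
      exact hinj i s (by omega) hslt (by rw [hm, hvs])
    have hds : d ≠ s := fun h => hnBs (h ▸ hBd)
    rcases (by omega : d < s ∨ s < d) with hdlts | hsltd
    · -- ## d < s
      have hAmid : ∀ i, d ≤ i → i ≤ s-1 → G.Adj y (v i) := by
        refine Stmt14Aux.interval_ind _ d (s-1) hAd ?_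
        intro i h1 h2 hAi
        have hnB : ¬ G.Adj x (v (i+1)) := fun hB => R0 i (by omega) hAi hB
        by_contra hnA
        have := hSuniq (i+1) (by omega) (by omega) hnB hnA
        omega
      have hj₀ges : s ≤ j₀ := by
        have hj₀d : ¬ j₀ < d := by
          intro hj
          have hNB : ∀ i, j₀+1 ≤ i → i ≤ d → ¬ G.Adj x (v i) := by
            refine Stmt14Aux.interval_ind _ (j₀+1) d hj₀B ?_
            intro i h1 h2 hnBi
            have hAi : G.Adj y (v i) := by
              by_contra hnA
              have := hSuniq i (by omega) (by omega) hnBi hnA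
              omega
            exact fun hB => R0 i (by omega) hAi hB
          exact hNB d (by omega) (le_refl d) hBd
        by_contra hj
        push_neg at hj
        exact hj₀A (hAmid j₀ (by omega) (by omega))
      have hBlo : ∀ i, 1 ≤ i → i ≤ d → G.Adj x (v i) := by
        refine Stmt14Aux.interval_ind _ 1 d hB1 ?_
        intro i h1 h2 hBi
        have hnA : ¬ G.Adj y (v i) := by
          intro hA
          have := hDuniq i (by omega) hBi hA
          omega
        rcases hslk i (by omega) (by omega) with h | h
        · exact absurd h hnA
        · exact h
      by_cases hj₀s : j₀ = s
      · -- F2 with no second x-segment : cut {v d, v (s+1)}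
        have hAhi2 : ∀ i, s+1 ≤ i → i ≤ n-2 → G.Adj y (v i) := by
          refine Stmt14Aux.interval_ind _ (s+1) (n-2) ?_ ?_
          · have hnB : ¬ G.Adj x (v (s+1)) := hj₀s ▸ hj₀B
            by_contra hnA
            have := hSuniq (s+1) (by omega) (by omega) hnB hnA
            omega
          · intro i h1 h2 hAi
            have hnB : ¬ G.Adj x (v (i+1)) := fun hB => R0 i (by omega) hAi hB
            by_contra hnA
            have := hSuniq (i+1) (by omega) (by omega) hnB hnA
            omega
        have hAk : ∀ k, d < k → k ≤ n-1 → k ≠ s+1 → G.Adj y (v (k-1)) := by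
          intro k h1 h2 h3
          rcases (by omega : k-1 ≤ s-1 ∨ s+1 ≤ k-1) with h | h
          · exact hAmid (k-1) (by omega) h
          · exact hAhi2 (k-1) h (by omega)
        set T : Finset V := {v d, v (s+1)} with hT
        have hTc : T.card ≤ 4 := le_trans (Finset.card_insert_le _ _) (by simp)
        have hnotT : ∀ u, u ∉ T → u ≠ v d ∧ u ≠ v (s+1) := by
          intro u hu
          rw [hT] at hu
          simp only [Finset.mem_insert, Finset.mem_singleton] at hu
          push_neg at hu
          exact hu
        have hxT : x ∉ T := by
          rw [hT]
          simp only [Finset.mem_insert, Finset.mem_singleton]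
          push_neg
          constructor
          · intro h
            have := hvx d (by omega) h.symm
            omega
          · intro h
            have := hvx (s+1) (by omega) h.symm
            omega
        have hyT : y ∉ T := by
          rw [hT]
          simp only [Finset.mem_insert, Finset.mem_singleton]
          push_neg
          constructor
          · intro h
            have := hvy d (by omega) h.symm
            omega
          · intro h
            have := hvy (s+1) (by omega) h.symm
            omega
        have main : ∀ u w, u ∉ T → w ∉ T → G.Adj u w → pos u < d → d < pos w → False := by
          intro u w hu hw hadj hiu hkw
          obtain ⟨hw1, hw2⟩ := hnotT w hw
          have hk1 : pos w ≠ s + 1 := by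
            intro h
            apply hw2
            rw [← h, hposv]
          have hchord : G.Adj (v (pos u)) (v (pos w)) := by
            rw [hposv, hposv]
            exact hadj
          exact R1 (pos u) (pos w) (by omega) (by have := hposlt w; omega) hchord
            (hBlo (pos u + 1) (by omega) (by omega))
            (hAk (pos w) hkw (by have := hposlt w; omega) hk1)
        refine Stmt14Aux.cut_contra hε htough T hTc (fun u => pos u < d) x y hxT hyT ?_ ?_ ?_
        · show pos x < d
          rw [show pos x = 0 from by rw [← hv0, hposvi 0 (by omega)]]
          omega
        · show ¬ pos y < d
          rw [show pos y = n-1 from by rw [← hvl, hposvi (n-1) (by omega)]]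
          omega
        · intro u w hu hw hadj
          show pos u < d ↔ pos w < d
          constructor
          · intro h
            by_contra hk
            have hk2 : pos w ≠ d := by
              intro hh
              exact (hnotT w hw).1 (by rw [← hh, hposv])
            exact absurd (main u w hu hw hadj h (by omega)) (by simp)
          · intro h
            by_contra hk
            have hk2 : pos u ≠ d := by
              intro hh
              exact (hnotT u hu).1 (by rw [← hh, hposv])
            exact absurd (main w u hw hu hadj.symm h (by omega)) (by simp)
      · -- F2 general : the special vertex v s has degree ≤ 2
        have hsj : s+1 ≤ j₀ := by omega
        have hBmid2 : ∀ i, s+1 ≤ i → i ≤ j₀ → G.Adj x (v i) := by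
          refine Stmt14Aux.interval_ind _ (s+1) j₀ ?_ ?_
          · rcases hslk s (by omega) (by omega) with h | h
            · exact absurd h hnAs
            · exact h
          · intro i h1 h2 hBi
            have hnA : ¬ G.Adj y (v i) := by
              intro hA
              have := hDuniq i (by omega) hBi hA
              omega
            rcases hslk i (by omega) (by omega) with h | h
            · exact absurd h hnA
            · exact h
        have hAhi : ∀ i, j₀+1 ≤ i → i ≤ n-2 → G.Adj y (v i) := by
          refine Stmt14Aux.interval_ind _ (j₀+1) (n-2) ?_ ?_
          · by_contra hnA
            have := hSuniq (j₀+1) (by omega) (by omega) hj₀B hnA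
            omega
          · intro i h1 h2 hAi
            have hnB : ¬ G.Adj x (v (i+1)) := fun hB => R0 i (by omega) hAi hB
            by_contra hnA
            have := hSuniq (i+1) (by omega) (by omega) hnB hnA
            omega
        set T : Finset V := {v (s-1), v (s+1)} with hT
        have hTc : T.card ≤ 4 := le_trans (Finset.card_insert_le _ _) (by simp)
        have hnotT : ∀ u, u ∉ T → u ≠ v (s-1) ∧ u ≠ v (s+1) := by
          intro u hu
          rw [hT] at hu
          simp only [Finset.mem_insert, Finset.mem_singleton] at hu
          push_neg at hu
          exact hu
        have hxT : x ∉ T := by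
          rw [hT]
          simp only [Finset.mem_insert, Finset.mem_singleton]
          push_neg
          constructor
          · intro h
            have := hvx (s-1) (by omega) h.symm
            omega
          · intro h
            have := hvx (s+1) (by omega) h.symm
            omega
        have hvsT : v s ∉ T := by
          rw [hT]
          simp only [Finset.mem_insert, Finset.mem_singleton]
          push_neg
          constructor
          · intro h
            have := hinj s (s-1) (by omega) (by omega) h
            omega
          · intro h
            have := hinj s (s+1) (by omega) (by omega) h
            omega
        have main : ∀ w, w ∉ T → w ≠ v s → G.Adj (v s) w → False := by
          intro w hw hne hadj
          have hkn : pos w < n := hposlt w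
          obtain ⟨hw1, hw2⟩ := hnotT w hw
          have hk1 : pos w ≠ s-1 := fun h => hw1 (by rw [← h, hposv])
          have hk2 : pos w ≠ s+1 := fun h => hw2 (by rw [← h, hposv])
          have hk3 : pos w ≠ s := fun h => hne (by rw [← h, hposv])
          have hchord : G.Adj (v s) (v (pos w)) := by
            rw [hposv w]
            exact hadj
          rcases (by omega : pos w ≤ s-2 ∨ s+2 ≤ pos w) with hklt | hkgt
          · rcases (by omega : pos w ≤ d-1 ∨ d ≤ pos w) with h | h
            · exact R1 (pos w) s (by omega) (by omega) hchord.symm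
                (hBlo (pos w + 1) (by omega) (by omega))
                (hAmid (s-1) (by omega) (by omega))
            · exact R3 (pos w) s (by omega) (by omega) hchord.symm
                (hAmid (pos w + 1) (by omega) (by omega))
                (hBmid2 (s+1) (by omega) (by omega))
          · rcases (by omega : pos w ≤ j₀+1 ∨ j₀+2 ≤ pos w) with h | h
            · exact R4 s (pos w) (by omega) (by omega) (by omega) hchord
                (hAmid (s-1) (by omega) (by omega))
                (hBmid2 (pos w - 1) (by omega) (by omega))
            · exact R1 s (pos w) (by omega) (by omega) hchord
                (hBmid2 (s+1) (by omega) (by omega))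
                (hAhi (pos w - 1) (by omega) (by omega))
        refine Stmt14Aux.cut_contra hε htough T hTc (fun u => u = v s) (v s) x hvsT hxT rfl ?_ ?_
        · intro h
          have := hvx s (by omega) h.symm
          omega
        · intro u w hu hw hadj
          show u = v s ↔ w = v s
          constructor
          · intro h
            by_contra hne
            rw [h] at hadj
            exact absurd (main w hw hne hadj) (by simp)
          · intro h
            by_contra hne
            rw [h] at hadj
            exact absurd (main u hu hne hadj.symm) (by simp)
    · -- ## s < d
      have hj₀lts : j₀ ≤ s-1 := by
        by_contra hj
        push_neg at hj
        have hBlo' : ∀ i, 1 ≤ i → i ≤ s → G.Adj x (v i) := by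
          refine Stmt14Aux.interval_ind _ 1 s hB1 ?_
          intro i h1 h2 hBi
          have hnA : ¬ G.Adj y (v i) := by
            intro hA
            have := hDuniq i (by omega) hBi hA
            omega
          rcases hslk i (by omega) (by omega) with h | h
          · exact absurd h hnA
          · exact h
        exact hnBs (hBlo' s (by omega) (le_refl s))
      have hBlo : ∀ i, 1 ≤ i → i ≤ j₀ → G.Adj x (v i) := by
        refine Stmt14Aux.interval_ind _ 1 j₀ hB1 ?_
        intro i h1 h2 hBi
        have hnA : ¬ G.Adj y (v i) := by
          intro hA
          have := hDuniq i (by omega) hBi hA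
          omega
        rcases hslk i (by omega) (by omega) with h | h
        · exact absurd h hnA
        · exact h
      have hBmid : ∀ i, s+1 ≤ i → i ≤ d → G.Adj x (v i) := by
        refine Stmt14Aux.interval_ind _ (s+1) d ?_ ?_
        · rcases hslk s (by omega) (by omega) with h | h
          · exact absurd h hnAs
          · exact h
        · intro i h1 h2 hBi
          have hnA : ¬ G.Adj y (v i) := by
            intro hA
            have := hDuniq i (by omega) hBi hA
            omega
          rcases hslk i (by omega) (by omega) with h | h
          · exact absurd h hnA
          · exact h
      have hAhi : ∀ i, d ≤ i → i ≤ n-2 → G.Adj y (v i) := by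
        refine Stmt14Aux.interval_ind _ d (n-2) hAd ?_
        intro i h1 h2 hAi
        have hnB : ¬ G.Adj x (v (i+1)) := fun hB => R0 i (by omega) hAi hB
        by_contra hnA
        have := hSuniq (i+1) (by omega) (by omega) hnB hnA
        omega
      by_cases hj₀s1 : j₀ = s-1
      · -- F1 : cut {v (s-1), v d}
        set T : Finset V := {v (s-1), v d} with hT
        have hTc : T.card ≤ 4 := le_trans (Finset.card_insert_le _ _) (by simp)
        have hnotT : ∀ u, u ∉ T → u ≠ v (s-1) ∧ u ≠ v d := by
          intro u hu
          rw [hT] at hu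
          simp only [Finset.mem_insert, Finset.mem_singleton] at hu
          push_neg at hu
          exact hu
        have hxT : x ∉ T := by
          rw [hT]
          simp only [Finset.mem_insert, Finset.mem_singleton]
          push_neg
          constructor
          · intro h
            have := hvx (s-1) (by omega) h.symm
            omega
          · intro h
            have := hvx d (by omega) h.symm
            omega
        have hyT : y ∉ T := by
          rw [hT]
          simp only [Finset.mem_insert, Finset.mem_singleton]
          push_neg
          constructor
          · intro h
            have := hvy (s-1) (by omega) h.symm
            omega
          · intro h
            have := hvy d (by omega) h.symm
            omega
        have main : ∀ u w, u ∉ T → w ∉ T → G.Adj u w → pos u < d → d < pos w → False := by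
          intro u w hu hw hadj hiu hkw
          obtain ⟨hu1, hu2⟩ := hnotT u hu
          have hi1 : pos u ≠ s-1 := fun h => hu1 (by rw [← h, hposv])
          have hchord : G.Adj (v (pos u)) (v (pos w)) := by
            rw [hposv, hposv]
            exact hadj
          have hBi : G.Adj x (v (pos u + 1)) := by
            rcases (by omega : pos u + 1 ≤ s-1 ∨ s+1 ≤ pos u + 1) with h | h
            · exact hBlo (pos u + 1) (by omega) (by omega)
            · exact hBmid (pos u + 1) h (by omega)
          exact R1 (pos u) (pos w) (by omega) (by have := hposlt w; omega) hchord hBi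
            (hAhi (pos w - 1) (by omega) (by have := hposlt w; omega))
        refine Stmt14Aux.cut_contra hε htough T hTc (fun u => pos u < d) x y hxT hyT ?_ ?_ ?_
        · show pos x < d
          rw [show pos x = 0 from by rw [← hv0, hposvi 0 (by omega)]]
          omega
        · show ¬ pos y < d
          rw [show pos y = n-1 from by rw [← hvl, hposvi (n-1) (by omega)]]
          omega
        · intro u w hu hw hadj
          show pos u < d ↔ pos w < d
          constructor
          · intro h
            by_contra hk
            have hk2 : pos w ≠ d := by
              intro hh
              exact (hnotT w hw).2 (by rw [← hh, hposv])
            exact absurd (main u w hu hw hadj h (by omega)) (by simp)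
          · intro h
            by_contra hk
            have hk2 : pos u ≠ d := by
              intro hh
              exact (hnotT u hu).2 (by rw [← hh, hposv])
            exact absurd (main w u hw hu hadj.symm h (by omega)) (by simp)
      · -- F3 : the special vertex v s has degree ≤ 2
        have hj₀s2 : j₀ ≤ s-2 := by omega
        have hAmid : ∀ i, j₀+1 ≤ i → i ≤ s-1 → G.Adj y (v i) := by
          refine Stmt14Aux.interval_ind _ (j₀+1) (s-1) ?_ ?_
          · by_contra hnA
            have := hSuniq (j₀+1) (by omega) (by omega) hj₀B hnA
            omega
          · intro i h1 h2 hAi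
            have hnB : ¬ G.Adj x (v (i+1)) := fun hB => R0 i (by omega) hAi hB
            by_contra hnA
            have := hSuniq (i+1) (by omega) (by omega) hnB hnA
            omega
        set T : Finset V := {v (s-1), v (s+1)} with hT
        have hTc : T.card ≤ 4 := le_trans (Finset.card_insert_le _ _) (by simp)
        have hnotT : ∀ u, u ∉ T → u ≠ v (s-1) ∧ u ≠ v (s+1) := by
          intro u hu
          rw [hT] at hu
          simp only [Finset.mem_insert, Finset.mem_singleton] at hu
          push_neg at hu
          exact hu
        have hxT : x ∉ T := by
          rw [hT]
          simp only [Finset.mem_insert, Finset.mem_singleton]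
          push_neg
          constructor
          · intro h
            have := hvx (s-1) (by omega) h.symm
            omega
          · intro h
            have := hvx (s+1) (by omega) h.symm
            omega
        have hvsT : v s ∉ T := by
          rw [hT]
          simp only [Finset.mem_insert, Finset.mem_singleton]
          push_neg
          constructor
          · intro h
            have := hinj s (s-1) (by omega) (by omega) h
            omega
          · intro h
            have := hinj s (s+1) (by omega) (by omega) h
            omega
        have main : ∀ w, w ∉ T → w ≠ v s → G.Adj (v s) w → False := by
          intro w hw hne hadj
          have hkn : pos w < n := hposlt w
          obtain ⟨hw1, hw2⟩ := hnotT w hw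
          have hk1 : pos w ≠ s-1 := fun h => hw1 (by rw [← h, hposv])
          have hk2 : pos w ≠ s+1 := fun h => hw2 (by rw [← h, hposv])
          have hk3 : pos w ≠ s := fun h => hne (by rw [← h, hposv])
          have hchord : G.Adj (v s) (v (pos w)) := by
            rw [hposv w]
            exact hadj
          rcases (by omega : pos w ≤ s-2 ∨ s+2 ≤ pos w) with hklt | hkgt
          · rcases (by omega : pos w ≤ j₀-1 ∨ j₀ ≤ pos w) with h | h
            · exact R1 (pos w) s (by omega) (by omega) hchord.symm
                (hBlo (pos w + 1) (by omega) (by omega))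
                (hAmid (s-1) (by omega) (by omega))
            · exact R3 (pos w) s (by omega) (by omega) hchord.symm
                (hAmid (pos w + 1) (by omega) (by omega))
                (hBmid (s+1) (by omega) (by omega))
          · rcases (by omega : pos w ≤ d+1 ∨ d+2 ≤ pos w) with h | h
            · exact R4 s (pos w) (by omega) (by omega) (by omega) hchord
                (hAmid (s-1) (by omega) (by omega))
                (hBmid (pos w - 1) (by omega) (by omega))
            · exact R1 s (pos w) (by omega) (by omega) hchord
                (hBmid (s+1) (by omega) (by omega))
                (hAhi (pos w - 1) (by omega) (by omega))
        refine Stmt14Aux.cut_contra hε htough T hTc (fun u => u = v s) (v s) x hvsT hxT rfl ?_ ?_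
        · intro h
          have := hvx s (by omega) h.symm
          omega
        · intro u w hu hw hadj
          show u = v s ↔ w = v s
          constructor
          · intro h
            by_contra hne
            rw [h] at hadj
            exact absurd (main w hw hne hadj) (by simp)
          · intro h
            by_contra hne
            rw [h] at hadj
            exact absurd (main u hu hne hadj.symm) (by simp)
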